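/- For every natural number n ≥ 1 and every real number x with 0 < x < 1, we have (1 + x)^n / (n + 1) < max_{0 ≤ k ≤ ⌊n/2⌋} C(n, k)·x^k < (1 + x)^n. -/

import Mathlib

/-- For `n ≥ 1` and `0 < x < 1`:
`(1+x)^n / (n+1) < max_{0 ≤ k ≤ ⌊n/2⌋} C(n,k) x^k < (1+x)^n`. -/
theorem max_binom_bounds (n : ℕ) (hn : 1 ≤ n) (x : ℝ) (hx0 : 0 < x) (hx1 : x < 1) :
    (1 + x) ^ n / ((n : ℝ) + 1) <
      (Finset.range (n / 2 + 1)).sup' Finset.nonempty_range_add_one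
        (fun k => (n.choose k : ℝ) * x ^ k) ∧
    (Finset.range (n / 2 + 1)).sup' Finset.nonempty_range_add_one
        (fun k => (n.choose k : ℝ) * x ^ k) < (1 + x) ^ n := by
  set f : ℕ → ℝ := fun k => (n.choose k : ℝ) * x ^ k with hf
  set M := (Finset.range (n / 2 + 1)).sup' Finset.nonempty_range_add_one f with hMdef
  have hfpos : ∀ k ≤ n, 0 < f k := by
    intro k hk
    exact mul_pos (by exact_mod_cast Nat.choose_pos hk) (pow_pos hx0 k)
  have hM1 : (1:ℝ) ≤ M := by
    have h0 : f 0 ≤ M := Finset.le_sup' f (Finset.mem_range.mpr (Nat.succ_pos _))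
    simpa [hf] using h0
  have hfle : ∀ k, f k ≤ M := by
    intro k
    by_cases hk : k ≤ n / 2
    · exact Finset.le_sup' f (Finset.mem_range.mpr (Nat.lt_succ_of_le hk))
    · by_cases hkn : k ≤ n
      · have hj : n - k ≤ n / 2 := by omega
        have hjk : n - k ≤ k := by omega
        have hle : f k ≤ f (n - k) := by
          simp only [hf]
          rw [← Nat.choose_symm hkn]
          exact mul_le_mul_of_nonneg_left
            (pow_le_pow_of_le_one hx0.le hx1.le hjk) (by positivity)
        exact hle.trans (Finset.le_sup' f (Finset.mem_range.mpr (Nat.lt_succ_of_le hj)))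
      · have : n.choose k = 0 := Nat.choose_eq_zero_of_lt (by omega)
        simp only [hf, this, Nat.cast_zero, zero_mul]
        linarith
  have hsum : (1 + x) ^ n = ∑ k ∈ Finset.range (n + 1), f k := by
    rw [add_comm, add_pow]
    refine Finset.sum_congr rfl fun k _ => ?_
    simp [hf, mul_comm]
  constructor
  · -- lower bound
    have hlt : (1 + x) ^ n < ((n : ℝ) + 1) * M := by
      rw [hsum]
      have : ∑ k ∈ Finset.range (n + 1), f k < ∑ _k ∈ Finset.range (n + 1), M := by
        refine Finset.sum_lt_sum (fun k _ => hfle k) ⟨n, Finset.self_mem_range_succ n, ?_⟩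
        have : f n = x ^ n := by simp [hf]
        rw [this]
        calc x ^ n < 1 := pow_lt_one₀ hx0.le hx1 (by omega)
          _ ≤ M := hM1
      simpa [Finset.sum_const, Finset.card_range, nsmul_eq_mul, add_comm] using this
    rw [div_lt_iff₀ (by positivity)]
    linarith [hlt]
  · -- upper bound
    obtain ⟨k0, hk0mem, hk0⟩ := Finset.exists_mem_eq_sup' (s := Finset.range (n / 2 + 1)) Finset.nonempty_range_add_one f
    have hk0n : k0 ≤ n := by
      have := Finset.mem_range.mp hk0mem; omega
    have hk0mem' : k0 ∈ Finset.range (n + 1) := Finset.mem_range.mpr (by omega)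
    set k1 := if k0 = 0 then n else 0 with hk1def
    have hk1n : k1 ≤ n := by simp only [hk1def]; split_ifs with h <;> omega
    have hk1ne : k1 ≠ k0 := by simp only [hk1def]; split_ifs with h <;> omega
    have hk1mem : k1 ∈ (Finset.range (n + 1)).erase k0 :=
      Finset.mem_erase.mpr ⟨hk1ne, Finset.mem_range.mpr (by omega)⟩
    have hrest : 0 < ∑ k ∈ (Finset.range (n + 1)).erase k0, f k := by
      refine lt_of_lt_of_le (hfpos k1 hk1n) ?_
      refine Finset.single_le_sum (fun k hk => ?_) hk1mem
      have hk' : k ≤ n := by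
        have := Finset.mem_range.mp (Finset.mem_of_mem_erase hk); omega
      exact (hfpos k hk').le
    have := Finset.add_sum_erase (Finset.range (n + 1)) f hk0mem'
    rw [hsum, ← this, hMdef, hk0]
    linarith [hrest]
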